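/- arXiv:2604.08998 — 13 statements merged into one kernel-verified Lean document; each statement's English description precedes it below -/
import Mathlib

section
/- Let n ≥ 2 be an even integer. Then the polynomial D(F_n,x) = x^n (x+2)^n + x (1+x)^{2n} has exactly three real zeros: x = 0, one simple zero x_n^- lying in the open interval (-2,-1), and one simple zero x_n^+ lying in the open interval (-1,0). -/
open Set Filter Topology

private def Fp (m : ℕ) (x : ℝ) : ℝ :=
  x ^ (m + 1) * (x + 2) ^ (m + 1) + x * (1 + x) ^ (2 * (m + 1))

private def Dp (m : ℕ) (x : ℝ) : ℝ :=
  2 * ((m : ℝ) + 1) * (1 + x) * (x ^ m * (x + 2) ^ m)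
    + (1 + x) ^ (2 * m + 1) * ((2 * (m : ℝ) + 3) * x + 1)

private lemma Fp_hasDerivAt (m : ℕ) (x : ℝ) : HasDerivAt (Fp m) (Dp m x) x := by
  have h1 : HasDerivAt (fun y : ℝ => y ^ (m + 1)) (((m : ℝ) + 1) * x ^ m) x := by
    simpa using hasDerivAt_pow (m + 1) x
  have h2 : HasDerivAt (fun y : ℝ => (y + 2) ^ (m + 1)) (((m : ℝ) + 1) * (x + 2) ^ m) x := by
    have h := ((hasDerivAt_id x).add_const (2 : ℝ)).pow (m + 1)
    simp at h; exact h
  have h3 : HasDerivAt (fun y : ℝ => (1 + y) ^ (2 * (m + 1)))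
      ((2 * ((m : ℝ) + 1)) * (1 + x) ^ (2 * m + 1)) x := by
    have h := ((hasDerivAt_const x (1 : ℝ)).add (hasDerivAt_id x)).pow (2 * (m + 1))
    have e : 2 * (m + 1) - 1 = 2 * m + 1 := by omega
    rw [e] at h
    have e2 : ((2 * (m + 1) : ℕ) : ℝ) = 2 * ((m : ℝ) + 1) := by push_cast; ring
    simp [e2] at h; exact h
  have h4 := (h1.mul h2).add ((hasDerivAt_id x).mul h3)
  have he : Dp m x = ((m : ℝ) + 1) * x ^ m * (x + 2) ^ (m + 1)
      + x ^ (m + 1) * (((m : ℝ) + 1) * (x + 2) ^ m)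
      + (1 * (1 + x) ^ (2 * (m + 1)) + x * (2 * ((m : ℝ) + 1) * (1 + x) ^ (2 * m + 1))) := by
    unfold Dp; ring
  rw [he]
  exact h4

private lemma Fp_cont (m : ℕ) : Continuous (Fp m) := by
  unfold Fp; fun_prop

private lemma Fp_zero (m : ℕ) : Fp m 0 = 0 := by
  unfold Fp
  rw [zero_pow (Nat.succ_ne_zero m)]
  ring

private lemma Fp_neg_two (m : ℕ) : Fp m (-2) = -2 := by
  unfold Fp
  rw [show (-2 : ℝ) + 2 = 0 by ring, show (1 : ℝ) + -2 = -1 by ring,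
    zero_pow (Nat.succ_ne_zero m), Even.neg_one_pow (even_two_mul (m + 1))]
  ring

private lemma Fp_neg_one (m : ℕ) (hne : Even (m + 1)) : Fp m (-1) = 1 := by
  unfold Fp
  rw [show (-1 : ℝ) + 2 = 1 by ring, show (1 : ℝ) + -1 = 0 by ring,
    zero_pow (by omega : 2 * (m + 1) ≠ 0), one_pow, hne.neg_one_pow]
  ring

private lemma Fp_pos (m : ℕ) {x : ℝ} (hx : 0 < x) : 0 < Fp m x := by
  unfold Fp
  have h1 : 0 < x ^ (m + 1) * (x + 2) ^ (m + 1) :=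
    mul_pos (pow_pos hx _) (pow_pos (by linarith) _)
  have h2 : 0 < x * (1 + x) ^ (2 * (m + 1)) := mul_pos hx (pow_pos (by linarith) _)
  linarith

private lemma Fp_neg_left (m : ℕ) {x : ℝ} (hx : x ≤ -2) : Fp m x < 0 := by
  have hu0 : 0 ≤ x * (x + 2) := by nlinarith
  have h2 : (x * (x + 2)) ^ (m + 1) ≤ ((1 + x) ^ 2) ^ (m + 1) :=
    pow_le_pow_left₀ hu0 (by nlinarith) _
  have h3 : (1 : ℝ) ≤ (1 + x) ^ 2 := by nlinarith
  have h4 : (1 : ℝ) ≤ ((1 + x) ^ 2) ^ (m + 1) := one_le_pow₀ h3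
  have h5 : x * ((1 + x) ^ 2) ^ (m + 1) ≤ -2 * ((1 + x) ^ 2) ^ (m + 1) :=
    mul_le_mul_of_nonneg_right hx (by positivity)
  have heq : Fp m x = (x * (x + 2)) ^ (m + 1) + x * ((1 + x) ^ 2) ^ (m + 1) := by
    unfold Fp; rw [← mul_pow, pow_mul]
  rw [heq]; nlinarith

private lemma Dp_pos (m : ℕ) (hmodd : Odd m) {x : ℝ} (hx1 : -2 < x) (hx2 : x < -1) :
    0 < Dp m x := by
  have hxx : x * (x + 2) < 0 := mul_neg_of_neg_of_pos (by linarith) (by linarith)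
  have h1 : (x * (x + 2)) ^ m < 0 := hmodd.pow_neg hxx
  have h1' : x ^ m * (x + 2) ^ m < 0 := by rwa [mul_pow] at h1
  have h2 : (1 + x) ^ (2 * m + 1) < 0 := (odd_two_mul_add_one m).pow_neg (by linarith)
  have h3 : (2 * (m : ℝ) + 3) * x + 1 < 0 := by
    nlinarith [Nat.cast_nonneg (α := ℝ) m]
  have t1 : 0 < 2 * ((m : ℝ) + 1) * ((1 + x) * (x ^ m * (x + 2) ^ m)) :=
    mul_pos (by positivity) (mul_pos_of_neg_of_neg (by linarith) h1')
  have t2 : 0 < (1 + x) ^ (2 * m + 1) * ((2 * (m : ℝ) + 3) * x + 1) :=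
    mul_pos_of_neg_of_neg h2 h3
  have heq : Dp m x = 2 * ((m : ℝ) + 1) * ((1 + x) * (x ^ m * (x + 2) ^ m))
      + (1 + x) ^ (2 * m + 1) * ((2 * (m : ℝ) + 3) * x + 1) := by
    unfold Dp; ring
  rw [heq]; linarith

private lemma Fp_root_eq (m : ℕ) (hne : Even (m + 1)) {x : ℝ} (hx0 : x < 0)
    (h : Fp m x = 0) : (-x) ^ m * (2 + x) ^ (m + 1) = (1 + x) ^ (2 * (m + 1)) := by
  have h' : x ^ (m + 1) * (x + 2) ^ (m + 1) + x * (1 + x) ^ (2 * (m + 1)) = 0 := h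
  have hneg : (-x) ^ (m + 1) = x ^ (m + 1) := hne.neg_pow x
  have key : (-x) * ((-x) ^ m * (2 + x) ^ (m + 1) - (1 + x) ^ (2 * (m + 1))) = 0 := by
    linear_combination h' + (2 + x) ^ (m + 1) * hneg
  rcases mul_eq_zero.mp key with h1 | h1
  · exfalso; linarith [neg_eq_zero.mp h1]
  · exact sub_eq_zero.mp h1

private lemma Fp_uniq (m : ℕ) (hm : 1 ≤ m) (hne : Even (m + 1)) {x y : ℝ}
    (hx : x ∈ Ioo (-1 : ℝ) 0) (hy : y ∈ Ioo (-1 : ℝ) 0)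
    (hfx : Fp m x = 0) (hfy : Fp m y = 0) : x = y := by
  have core : ∀ u v : ℝ, u ∈ Ioo (-1 : ℝ) 0 → v ∈ Ioo (-1 : ℝ) 0 →
      Fp m u = 0 → Fp m v = 0 → u < v → False := by
    intro u v hu hv hfu hfv huv
    have Eu := Fp_root_eq m hne hu.2 hfu
    have Ev := Fp_root_eq m hne hv.2 hfv
    have hAu : 0 < (-u) ^ m := pow_pos (by linarith [hu.2]) m
    have hBv : 0 < (2 + v) ^ (m + 1) := pow_pos (by linarith [hv.1]) _
    have hCu : 0 < (1 + u) ^ (2 * (m + 1)) := pow_pos (by linarith [hu.1]) _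
    have hAA : (-v) ^ m < (-u) ^ m :=
      pow_lt_pow_left₀ (by linarith) (by linarith [hv.2]) (by omega)
    have hkey : (2 + v) * (1 + u) ^ 2 < (2 + u) * (1 + v) ^ 2 := by
      nlinarith [mul_pos (sub_pos.mpr huv)
        (show (0 : ℝ) < (1 + u) + (1 + v) + (1 + u) * (1 + v) by nlinarith [hu.1, hv.1])]
    have hBC : (2 + v) ^ (m + 1) * (1 + u) ^ (2 * (m + 1))
        < (2 + u) ^ (m + 1) * (1 + v) ^ (2 * (m + 1)) := by
      have hp := pow_lt_pow_left₀ hkey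
        (by nlinarith [hu.1, hv.1] : (0 : ℝ) ≤ (2 + v) * (1 + u) ^ 2) (Nat.succ_ne_zero m)
      calc (2 + v) ^ (m + 1) * (1 + u) ^ (2 * (m + 1))
          = ((2 + v) * (1 + u) ^ 2) ^ (m + 1) := by rw [pow_mul, ← mul_pow]
        _ < ((2 + u) * (1 + v) ^ 2) ^ (m + 1) := hp
        _ = (2 + u) ^ (m + 1) * (1 + v) ^ (2 * (m + 1)) := by rw [mul_pow, ← pow_mul]
    have h1 : (-u) ^ m * ((2 + v) ^ (m + 1) * (1 + u) ^ (2 * (m + 1)))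
        < (-u) ^ m * ((2 + u) ^ (m + 1) * (1 + v) ^ (2 * (m + 1))) :=
      mul_lt_mul_of_pos_left hBC hAu
    have h2 : (-v) ^ m * ((2 + v) ^ (m + 1) * (1 + u) ^ (2 * (m + 1)))
        ≤ (-u) ^ m * ((2 + v) ^ (m + 1) * (1 + u) ^ (2 * (m + 1))) :=
      mul_le_mul_of_nonneg_right hAA.le (by positivity)
    have hfinal : (1 + v) ^ (2 * (m + 1)) * (1 + u) ^ (2 * (m + 1))
        < (1 + u) ^ (2 * (m + 1)) * (1 + v) ^ (2 * (m + 1)) := by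
      calc (1 + v) ^ (2 * (m + 1)) * (1 + u) ^ (2 * (m + 1))
          = (-v) ^ m * ((2 + v) ^ (m + 1) * (1 + u) ^ (2 * (m + 1))) := by
            rw [← mul_assoc, Ev]
        _ ≤ (-u) ^ m * ((2 + v) ^ (m + 1) * (1 + u) ^ (2 * (m + 1))) := h2
        _ < (-u) ^ m * ((2 + u) ^ (m + 1) * (1 + v) ^ (2 * (m + 1))) := h1
        _ = (1 + u) ^ (2 * (m + 1)) * (1 + v) ^ (2 * (m + 1)) := by
            rw [← mul_assoc, Eu]
    rw [mul_comm] at hfinal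
    exact lt_irrefl _ hfinal
  rcases lt_trichotomy x y with h | h | h
  · exact absurd (core x y hx hy hfx hfy h) (fun h => h)
  · exact h
  · exact absurd (core y x hy hx hfy hfx h) (fun h => h)

private lemma Dp_neg_root (m : ℕ) (hm : 1 ≤ m) {b : ℝ} (hb : b ∈ Ioo (-1 : ℝ) 0)
    (hfb : Fp m b = 0) : Dp m b < 0 := by
  have h' : b ^ (m + 1) * (b + 2) ^ (m + 1) + b * (1 + b) ^ (2 * (m + 1)) = 0 := hfb
  have key : Dp m b * (b * (b + 2)) =
      b * (1 + b) ^ (2 * m + 1) * (b ^ 2 + 3 * b + 2 - 2 * ((m : ℝ) + 1)) := by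
    unfold Dp
    linear_combination (2 * ((m : ℝ) + 1) * (1 + b)) * h'
  have hb1 : 0 < (1 + b) ^ (2 * m + 1) := pow_pos (by linarith [hb.1]) _
  have hb2 : b * (1 + b) ^ (2 * m + 1) < 0 := mul_neg_of_neg_of_pos hb.2 hb1
  have hmr : (1 : ℝ) ≤ (m : ℝ) := by exact_mod_cast hm
  have hb3 : b ^ 2 + 3 * b + 2 - 2 * ((m : ℝ) + 1) < 0 := by nlinarith [hb.1, hb.2]
  have hb4 : 0 < Dp m b * (b * (b + 2)) := by
    rw [key]; exact mul_pos_of_neg_of_neg hb2 hb3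
  have hbb : b * (b + 2) < 0 := mul_neg_of_neg_of_pos hb.2 (by linarith [hb.1])
  by_contra hcon
  push_neg at hcon
  nlinarith [mul_nonneg hcon (neg_nonneg.mpr hbb.le)]

/-- For even `n ≥ 2`, the friendship-graph domination polynomial
`D(F_n,x) = x^n (x+2)^n + x (1+x)^(2n)` has exactly three real zeros:
`0`, a simple zero in `(-2,-1)`, and a simple zero in `(-1,0)`. -/
theorem friendship_exactly_three_real_zeros (n : ℕ) (hn : 2 ≤ n) (hne : Even n) :
    ∃ a b : ℝ, a ∈ Set.Ioo (-2 : ℝ) (-1) ∧ b ∈ Set.Ioo (-1 : ℝ) 0 ∧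
      (fun x : ℝ => x ^ n * (x + 2) ^ n + x * (1 + x) ^ (2 * n)) a = 0 ∧
      deriv (fun x : ℝ => x ^ n * (x + 2) ^ n + x * (1 + x) ^ (2 * n)) a ≠ 0 ∧
      (fun x : ℝ => x ^ n * (x + 2) ^ n + x * (1 + x) ^ (2 * n)) b = 0 ∧
      deriv (fun x : ℝ => x ^ n * (x + 2) ^ n + x * (1 + x) ^ (2 * n)) b ≠ 0 ∧
      ∀ x : ℝ, x ^ n * (x + 2) ^ n + x * (1 + x) ^ (2 * n) = 0 ↔ (x = 0 ∨ x = a ∨ x = b) := by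
  obtain ⟨m, rfl⟩ : ∃ m, n = m + 1 := ⟨n - 1, by omega⟩
  have hm : 1 ≤ m := by omega
  have hmodd : Odd m := Nat.not_even_iff_odd.mp (Nat.even_add_one.mp hne)
  have hcont := Fp_cont m
  have hmono : StrictMonoOn (Fp m) (Icc (-2 : ℝ) (-1)) := by
    apply strictMonoOn_of_deriv_pos (convex_Icc _ _) hcont.continuousOn
    intro x hx
    rw [interior_Icc, mem_Ioo] at hx
    rw [(Fp_hasDerivAt m x).deriv]
    exact Dp_pos m hmodd hx.1 hx.2
  have hivA : (0 : ℝ) ∈ Ioo (Fp m (-2)) (Fp m (-1)) := by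
    rw [Fp_neg_two, Fp_neg_one m hne]; norm_num
  obtain ⟨a, haI, hfa⟩ :=
    intermediate_value_Ioo (by norm_num : (-2 : ℝ) ≤ -1) hcont.continuousOn hivA
  -- derivative at 0 is 1, giving a point with negative value in (-1,0)
  have hD0 : HasDerivAt (Fp m) 1 0 := by
    have h := Fp_hasDerivAt m 0
    have e : Dp m 0 = 1 := by
      unfold Dp
      rw [zero_pow (by omega : m ≠ 0)]
      norm_num
    rwa [e] at h
  have hslope : ∀ᶠ y in 𝓝[≠] (0 : ℝ), 0 < slope (Fp m) 0 y :=
    (hasDerivAt_iff_tendsto_slope.mp hD0).eventually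
      (eventually_gt_nhds (by norm_num : (0 : ℝ) < 1))
  have hsub : 𝓝[<] (0 : ℝ) ≤ 𝓝[≠] (0 : ℝ) :=
    nhdsWithin_mono _ (fun y hy => ne_of_lt hy)
  have hmem : ∀ᶠ y in 𝓝[<] (0 : ℝ), y ∈ Ioo (-1 : ℝ) 0 := by
    exact Ioo_mem_nhdsLT_of_mem (by norm_num : (0 : ℝ) ∈ Ioc (-1 : ℝ) 0)
  obtain ⟨c, hc_slope, hcI⟩ := ((hslope.filter_mono hsub).and hmem).exists
  have hc_neg : Fp m c < 0 := by
    have hs : slope (Fp m) 0 c = Fp m c / c := by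
      rw [slope_def_field, Fp_zero]; ring_nf
    rw [hs] at hc_slope
    rcases div_pos_iff.mp hc_slope with ⟨h1, h2⟩ | ⟨h1, h2⟩
    · exact absurd h2 (not_lt.mpr hcI.2.le)
    · exact h1
  obtain ⟨b, hbI', hfb⟩ := intermediate_value_Ioo' (le_of_lt hcI.1) hcont.continuousOn
    (show (0 : ℝ) ∈ Ioo (Fp m c) (Fp m (-1)) by
      rw [Fp_neg_one m hne]; exact ⟨hc_neg, one_pos⟩)
  have hbI : b ∈ Ioo (-1 : ℝ) 0 := ⟨hbI'.1, lt_trans hbI'.2 hcI.2⟩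
  refine ⟨a, b, haI, hbI, hfa, ?_, hfb, ?_, ?_⟩
  · have hda : deriv (fun x : ℝ => x ^ (m + 1) * (x + 2) ^ (m + 1)
        + x * (1 + x) ^ (2 * (m + 1))) a = Dp m a := (Fp_hasDerivAt m a).deriv
    rw [hda]
    exact ne_of_gt (Dp_pos m hmodd haI.1 haI.2)
  · have hdb : deriv (fun x : ℝ => x ^ (m + 1) * (x + 2) ^ (m + 1)
        + x * (1 + x) ^ (2 * (m + 1))) b = Dp m b := (Fp_hasDerivAt m b).deriv
    rw [hdb]
    exact ne_of_lt (Dp_neg_root m hm hbI hfb)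
  · intro x
    constructor
    · intro hfx
      have hfx' : Fp m x = 0 := hfx
      rcases le_or_gt x (-2) with h | h
      · exact absurd hfx' (ne_of_lt (Fp_neg_left m h))
      rcases lt_trichotomy x (-1) with h1 | h1 | h1
      · right; left
        exact hmono.injOn ⟨h.le, h1.le⟩ ⟨haI.1.le, haI.2.le⟩ (by rw [hfx', hfa])
      · exfalso; rw [h1, Fp_neg_one m hne] at hfx'; norm_num at hfx'
      · rcases lt_trichotomy x 0 with h2 | h2 | h2
        · right; right; exact Fp_uniq m hm hne ⟨h1, h2⟩ hbI hfx' hfb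
        · left; exact h2
        · exact absurd hfx' (ne_of_gt (Fp_pos m h2))
    · rintro (rfl | rfl | rfl)
      · exact Fp_zero m
      · exact hfa
      · exact hfb
end

section
/- Let n ≥ 2 be an even integer. Then there exists exactly one real number x in the open interval (-1,0) such that x^n (x+2)^n + x (1+x)^{2n} = 0. -/
private lemma friendship_root_eq (n : ℕ) (hn : 2 ≤ n) (hne : Even n) {x : ℝ} (h1 : -1 < x) (h2 : x < 0)
    (hr : x ^ n * (x + 2) ^ n + x * (1 + x) ^ (2 * n) = 0) :
    (-x) ^ (n - 1) * (x + 2) ^ n = (1 + x) ^ (2 * n) := by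
  have e1 : x ^ n = (-x) ^ (n - 1) * (-x) := by
    rw [← pow_succ, show n - 1 + 1 = n by omega, hne.neg_pow]
  have hx0 : (-x) ≠ 0 := by intro h; nlinarith [h]
  apply mul_left_cancel₀ hx0
  have hr' : ((-x) ^ (n - 1) * (-x)) * (x + 2) ^ n + x * (1 + x) ^ (2 * n) = 0 := by
    rw [← e1]; exact hr
  linear_combination hr'

private lemma friendship_no_two (n : ℕ) (hn : 2 ≤ n) (hne : Even n) {x y : ℝ}
    (h1x : -1 < x) (h2x : x < 0) (h1y : -1 < y) (h2y : y < 0)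
    (hrx : x ^ n * (x + 2) ^ n + x * (1 + x) ^ (2 * n) = 0)
    (hry : y ^ n * (y + 2) ^ n + y * (1 + y) ^ (2 * n) = 0)
    (hxy : x < y) : False := by
  have Ex := friendship_root_eq n hn hne h1x h2x hrx
  have Ey := friendship_root_eq n hn hne h1y h2y hry
  have hab : (1 + x) ^ 2 * (y + 2) < (1 + y) ^ 2 * (x + 2) := by
    have key : 0 < ((1+y)-(1+x)) * ((1+x)*(1+y)+(1+x)+(1+y)) := by
      apply mul_pos (by linarith)
      have : (0:ℝ) < (1+x)*(1+y) := mul_pos (by linarith) (by linarith)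
      linarith
    nlinarith [key]
  have ha0 : (0 : ℝ) ≤ (1 + x) ^ 2 * (y + 2) := by nlinarith
  have hpow : ((1 + x) ^ 2 * (y + 2)) ^ n < ((1 + y) ^ 2 * (x + 2)) ^ n :=
    pow_lt_pow_left₀ hab ha0 (by omega)
  have ha : ((1 + x) ^ 2 * (y + 2)) ^ n = (-x) ^ (n - 1) * ((x + 2) ^ n * (y + 2) ^ n) := by
    rw [mul_pow, ← pow_mul, ← Ex]; ring
  have hb : ((1 + y) ^ 2 * (x + 2)) ^ n = (-y) ^ (n - 1) * ((x + 2) ^ n * (y + 2) ^ n) := by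
    rw [mul_pow, ← pow_mul, ← Ey]; ring
  rw [ha, hb] at hpow
  have hc : (0 : ℝ) < (x + 2) ^ n * (y + 2) ^ n :=
    mul_pos (pow_pos (by linarith) n) (pow_pos (by linarith) n)
  have h2 : (-x) ^ (n - 1) < (-y) ^ (n - 1) := lt_of_mul_lt_mul_right hpow hc.le
  have h3 : (-y) ^ (n - 1) < (-x) ^ (n - 1) :=
    pow_lt_pow_left₀ (by linarith) (by linarith) (by omega)
  linarith

/-- For even `n ≥ 2`, there is exactly one `x ∈ (-1,0)` with
`x^n (x+2)^n + x (1+x)^(2n) = 0`. -/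
theorem friendship_unique_root_in_Ioo_neg_one_zero (n : ℕ) (hn : 2 ≤ n) (hne : Even n) :
    ∃! x : ℝ, x ∈ Set.Ioo (-1 : ℝ) 0 ∧ x ^ n * (x + 2) ^ n + x * (1 + x) ^ (2 * n) = 0 := by
  set f : ℝ → ℝ := fun x => x ^ n * (x + 2) ^ n + x * (1 + x) ^ (2 * n) with hf
  have hfa : f (-1) = 1 := by
    simp only [hf]
    norm_num [hne.neg_one_pow, zero_pow (show 2 * n ≠ 0 by omega)]
  have hfb : f (-1/16) < 0 := by
    simp only [hf]
    have e : ((-1 : ℝ)/16) ^ n = (1/16 : ℝ) ^ n := by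
      rw [show ((-1:ℝ)/16) = -(1/16) by norm_num, hne.neg_pow]
    rw [e]
    have l : (1/16 : ℝ) ^ n * ((-1)/16 + 2) ^ n = (31/225 : ℝ) ^ n * (225/256) ^ n := by
      rw [← mul_pow, ← mul_pow]; norm_num
    have r : ((-1:ℝ)/16) * (1 + (-1)/16) ^ (2 * n) = -(1/16 : ℝ) * (225/256) ^ n := by
      rw [pow_mul]; norm_num
    rw [l, r]
    have hp : (0:ℝ) < (225/256 : ℝ) ^ n := by positivity
    have h1 : ((31:ℝ)/225) ^ n ≤ ((31:ℝ)/225) ^ 2 :=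
      pow_le_pow_of_le_one (by norm_num) (by norm_num) hn
    nlinarith [h1, hp, mul_le_mul_of_nonneg_right h1 hp.le]
  have hcont : ContinuousOn f (Set.Icc (-1) (-1/16)) := by
    apply Continuous.continuousOn; fun_prop
  have hmem : (0:ℝ) ∈ Set.Ioo (f (-1/16)) (f (-1)) := by
    rw [hfa]; exact ⟨hfb, by norm_num⟩
  obtain ⟨x, hx, hfx⟩ := intermediate_value_Ioo' (by norm_num : (-1:ℝ) ≤ -1/16) hcont hmem
  refine ⟨x, ⟨⟨hx.1, by linarith [hx.2]⟩, hfx⟩, ?_⟩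
  rintro y ⟨⟨h1y, h2y⟩, hry⟩
  rcases lt_trichotomy y x with h | h | h
  · exact absurd (friendship_no_two n hn hne h1y h2y hx.1 (by linarith [hx.2]) hry hfx h) id
  · exact h
  · exact absurd (friendship_no_two n hn hne hx.1 (by linarith [hx.2]) h1y h2y hfx hry h) id
end

section
/- Let n ≥ 2 be an even integer. Then there exists exactly one real number x in the open interval (-2,-1) such that x^n (x+2)^n + x (1+x)^{2n} = 0. -/
/-- For even `n ≥ 2`, there is exactly one `x ∈ (-2,-1)` with
`x^n (x+2)^n + x (1+x)^(2n) = 0`. -/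
theorem friendship_unique_root_in_Ioo_neg_two_neg_one (n : ℕ) (hn : 2 ≤ n) (hne : Even n) :
    ∃! x : ℝ, x ∈ Set.Ioo (-2 : ℝ) (-1) ∧ x ^ n * (x + 2) ^ n + x * (1 + x) ^ (2 * n) = 0 := by
  set f : ℝ → ℝ := fun x => x ^ n * (x + 2) ^ n + x * (1 + x) ^ (2 * n) with hf
  have hn0 : n ≠ 0 := by omega
  have hcont : Continuous f := by fun_prop
  -- derivative
  have hderiv : ∀ x : ℝ, HasDerivAt f
      ((↑n * x ^ (n - 1)) * (x + 2) ^ n + x ^ n * (↑n * (x + 2) ^ (n - 1) * 1)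
        + (1 * (1 + x) ^ (2 * n) + x * (↑(2 * n) * (1 + x) ^ (2 * n - 1) * 1))) x := by
    intro x
    have h2 : HasDerivAt (fun y : ℝ => (y + 2) ^ n) (↑n * (x + 2) ^ (n - 1) * 1) x :=
      ((hasDerivAt_id x).add_const 2).pow n
    have h4 : HasDerivAt (fun y : ℝ => (1 + y) ^ (2 * n)) (↑(2 * n) * (1 + x) ^ (2 * n - 1) * 1) x :=
      ((hasDerivAt_id x).const_add 1).pow (2 * n)
    exact ((hasDerivAt_pow n x).mul h2).add ((hasDerivAt_id x).mul h4)
  -- derivative positive on Ioo (-2) (-1)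
  have hdpos : ∀ x ∈ Set.Ioo (-2 : ℝ) (-1), 0 < deriv f x := by
    intro x hx
    obtain ⟨hx1, hx2⟩ := hx
    rw [(hderiv x).deriv]
    have hxneg : x < 0 := by linarith
    have hx2p : (0:ℝ) < x + 2 := by linarith
    have h1x : 1 + x < 0 := by linarith
    have hodd : Odd (n - 1) := Nat.Even.sub_odd (by omega) hne odd_one
    have hodd2 : Odd (2 * n - 1) := Nat.Even.sub_odd (by omega) (even_two_mul n) odd_one
    have ha : x ^ (n - 1) < 0 := hodd.pow_neg hxneg
    have hb : (0:ℝ) < (x + 2) ^ (n - 1) := pow_pos hx2p _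
    have hc : (1 + x) ^ (2 * n - 1) < 0 := hodd2.pow_neg h1x
    have hxn : x ^ n = x ^ (n - 1) * x := by
      rw [← pow_succ]; congr 1; omega
    have hx2n : (x + 2) ^ n = (x + 2) ^ (n - 1) * (x + 2) := by
      rw [← pow_succ]; congr 1; omega
    have h1xn : (1 + x) ^ (2 * n) = (1 + x) ^ (2 * n - 1) * (1 + x) := by
      rw [← pow_succ]; congr 1; omega
    have hn2 : (2:ℝ) ≤ (n:ℝ) := by exact_mod_cast hn
    rw [hxn, hx2n, h1xn]
    push_cast
    -- first part: n * (x^(n-1) * (x+2)^(n-1)) * (2x+2) > 0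
    have key1 : (0:ℝ) < (-(x ^ (n - 1))) * ((x + 2) ^ (n - 1)) * (-(2 * x + 2)) :=
      mul_pos (mul_pos (by linarith) hb) (by linarith)
    have key2 : (0:ℝ) < (1 + x) ^ (2 * n - 1) * (1 + x) :=
      mul_pos_of_neg_of_neg hc h1x
    have key3 : (0:ℝ) < x * ((1 + x) ^ (2 * n - 1)) :=
      mul_pos_of_neg_of_neg hxneg hc
    nlinarith [key1, key2, key3, mul_pos key3 (by linarith : (0:ℝ) < 2 * (n:ℝ)),
      mul_le_mul_of_nonneg_right hn2 (le_of_lt key1)]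
  have hmono : StrictMonoOn f (Set.Ioo (-2 : ℝ) (-1)) := by
    apply strictMonoOn_of_deriv_pos (convex_Ioo _ _) hcont.continuousOn
    intro x hx
    exact hdpos x (by simpa [interior_Ioo] using hx)
  -- values at endpoints
  have hfa : f (-2) = -2 := by
    have h : ((1:ℝ) + -2) = -1 := by norm_num
    simp [hf, zero_pow hn0, h, (even_two_mul n).neg_one_pow]
  have hfb : f (-1) = 1 := by
    have : ((-1:ℝ) + 2) = 1 := by norm_num
    simp [hf, this, hne.neg_one_pow, zero_pow (by omega : 2 * n ≠ 0)]
  -- existence via IVT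
  have hsub : Set.Ioo (f (-2)) (f (-1)) ⊆ f '' Set.Ioo (-2 : ℝ) (-1) :=
    intermediate_value_Ioo (by norm_num) hcont.continuousOn
  have h0 : (0:ℝ) ∈ Set.Ioo (f (-2)) (f (-1)) := by rw [hfa, hfb]; norm_num
  obtain ⟨x, hxmem, hxval⟩ := hsub h0
  refine ⟨x, ⟨hxmem, hxval⟩, ?_⟩
  rintro y ⟨hymem, hyval⟩
  exact hmono.injOn hymem hxmem (by rw [show f y = 0 from hyval, show f x = 0 from hxval])
end

section
/- Let n ≥ 1 be an integer and let t ∈ (0,1) satisfy (1−t)^{n−1} (1+t)^n = t^{2n}. Then t > 1/√2. -/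
/-- If `n ≥ 1` and `t ∈ (0,1)` satisfies `(1−t)^(n−1)(1+t)^n = t^(2n)`, then `t > 1/√2`. -/
theorem root_shift_gt_inv_sqrt_two (n : ℕ) (hn : 1 ≤ n) (t : ℝ)
    (ht : t ∈ Set.Ioo (0 : ℝ) 1)
    (heq : (1 - t) ^ (n - 1) * (1 + t) ^ n = t ^ (2 * n)) :
    1 / Real.sqrt 2 < t := by
  obtain ⟨ht0, ht1⟩ := ht
  by_contra h
  push_neg at h
  have ht2 : t ^ 2 ≤ 1 / 2 := by
    have h1 : t ^ 2 ≤ (1 / Real.sqrt 2) ^ 2 := pow_le_pow_left₀ ht0.le h 2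
    have h2 : (1 / Real.sqrt 2) ^ 2 = 1 / 2 := by
      rw [div_pow, one_pow, Real.sq_sqrt (by norm_num : (2:ℝ) ≥ 0)]
    linarith
  obtain ⟨m, rfl⟩ : ∃ m, n = m + 1 := ⟨n - 1, (Nat.succ_pred_eq_of_pos hn).symm⟩
  simp only [Nat.add_sub_cancel] at heq
  have hfact : (1 - t) ^ m * (1 + t) ^ (m + 1) = (1 + t) * (1 - t ^ 2) ^ m := by
    have : (1 : ℝ) - t ^ 2 = (1 - t) * (1 + t) := by ring
    rw [this, mul_pow, pow_succ]; ring
  have hrhs : t ^ (2 * (m + 1)) = (t ^ 2) ^ (m + 1) := by rw [← pow_mul]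
  rw [hfact, hrhs] at heq
  have hA : (0:ℝ) < (1/2 : ℝ) ^ m := by positivity
  have h1t2 : (1/2 : ℝ) ≤ 1 - t ^ 2 := by linarith
  have hpow1 : (1/2 : ℝ) ^ m ≤ (1 - t ^ 2) ^ m := pow_le_pow_left₀ (by norm_num) h1t2 m
  have hpow2 : (t ^ 2) ^ (m + 1) ≤ (1/2 : ℝ) ^ (m + 1) :=
    pow_le_pow_left₀ (by positivity) ht2 (m + 1)
  have hlb : (1 + t) * (1/2 : ℝ) ^ m ≤ (1 + t) * (1 - t ^ 2) ^ m :=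
    mul_le_mul_of_nonneg_left hpow1 (by linarith)
  have hub : (1/2 : ℝ) ^ (m + 1) = (1/2 : ℝ) ^ m * (1/2 : ℝ) := pow_succ _ _
  nlinarith [hA, hlb, hpow2, heq]
end

section
/- Let n ≥ 1 be an integer and let s ∈ (0,1) satisfy (1−s)^n (1+s)^{n−1} = s^{2n}. Then s < 1/√2. -/
/-- If `n ≥ 1` and `s ∈ (0,1)` satisfies `(1−s)^n (1+s)^(n−1) = s^(2n)`, then `s < 1/√2`. -/
theorem root_shift_lt_inv_sqrt_two (n : ℕ) (hn : 1 ≤ n) (s : ℝ)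
    (hs : s ∈ Set.Ioo (0 : ℝ) 1)
    (heq : (1 - s) ^ n * (1 + s) ^ (n - 1) = s ^ (2 * n)) :
    s < 1 / Real.sqrt 2 := by
  obtain ⟨hs0, hs1⟩ := hs
  by_contra h
  push_neg at h
  have hsq : Real.sqrt 2 ^ 2 = 2 := Real.sq_sqrt (by norm_num)
  have hsqpos : 0 < Real.sqrt 2 := Real.sqrt_pos.mpr (by norm_num)
  have hlt2 : Real.sqrt 2 < 2 := by nlinarith
  have hhalf : (1:ℝ)/2 < 1 / Real.sqrt 2 := by
    apply one_div_lt_one_div_of_lt hsqpos hlt2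
  have hs_half : (1:ℝ)/2 < s := lt_of_lt_of_le hhalf h
  have h2 : (1:ℝ)/2 ≤ s ^ 2 := by
    have : (1 / Real.sqrt 2) ^ 2 ≤ s ^ 2 :=
      pow_le_pow_left₀ (by positivity) h 2
    rw [div_pow, one_pow, hsq] at this
    exact this
  have hA : 1 - s ^ 2 ≤ s ^ 2 := by linarith
  have hB : 1 - s < s ^ 2 := by nlinarith
  obtain ⟨m, rfl⟩ : ∃ m, n = m + 1 := ⟨n - 1, (Nat.succ_pred_eq_of_pos hn).symm⟩
  simp only [Nat.add_sub_cancel] at heq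
  have e1 : (1 - s) ^ (m + 1) * (1 + s) ^ m = (1 - s) * (1 - s ^ 2) ^ m := by
    have h12 : (1 - s ^ 2) = (1 - s) * (1 + s) := by ring
    rw [h12, mul_pow, pow_succ]; ring
  have e2 : s ^ (2 * (m + 1)) = s ^ 2 * (s ^ 2) ^ m := by
    rw [pow_mul, pow_succ]; ring
  rw [e1, e2] at heq
  have h3 : (1 - s ^ 2) ^ m ≤ (s ^ 2) ^ m :=
    pow_le_pow_left₀ (by nlinarith) hA m
  have h4 : (1 - s) * (1 - s ^ 2) ^ m ≤ (1 - s) * (s ^ 2) ^ m :=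
    mul_le_mul_of_nonneg_left h3 (by linarith)
  have h5 : (1 - s) * (s ^ 2) ^ m < s ^ 2 * (s ^ 2) ^ m :=
    mul_lt_mul_of_pos_right hB (pow_pos (by positivity) m)
  linarith
end

section
/- Let n ≥ 2 be an even integer, let t_n ∈ (0,1) satisfy (1−t_n)^{n−1}(1+t_n)^n = t_n^{2n}, and let t_{n+2} ∈ (0,1) satisfy (1−t_{n+2})^{n+1}(1+t_{n+2})^{n+2} = t_{n+2}^{2(n+2)}. Then t_{n+2} < t_n. Similarly, if s_n ∈ (0,1) satisfies (1−s_n)^n(1+s_n)^{n−1} = s_n^{2n} and s_{n+2} ∈ (0,1) satisfies (1−s_{n+2})^{n+2}(1+s_{n+2})^{n+1} = s_{n+2}^{2(n+2)}, then s_{n+2} > s_n. -/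
lemma auxA (m : ℕ) (t : ℝ) (h0 : 0 < t) (h1 : t < 1)
    (he : (1 - t^2)^(m+1) * (1+t) = t^(2*m+4)) : 1 - t^2 < t^2 := by
  by_contra h
  push_neg at h
  have ht2 : (0:ℝ) < t^2 := by positivity
  have h1' : t^(2*m+2) ≤ (1-t^2)^(m+1) := by
    calc t^(2*m+2) = (t^2)^(m+1) := by ring
      _ ≤ (1-t^2)^(m+1) := pow_le_pow_left₀ ht2.le h _
  have h2' : (1-t^2)^(m+1) ≤ (1-t^2)^(m+1) * (1+t) := by
    have hnn : (0:ℝ) ≤ (1-t^2)^(m+1) := pow_nonneg (by linarith) _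
    nlinarith
  have h3 : t^(2*m+2) ≤ t^(2*m+4) := by
    calc t^(2*m+2) ≤ (1-t^2)^(m+1) := h1'
      _ ≤ (1-t^2)^(m+1) * (1+t) := h2'
      _ = t^(2*m+4) := he
  have h4 : t^(2*m+4) < t^(2*m+2) := by
    calc t^(2*m+4) = t^(2*m+2)*t^2 := by ring
      _ < t^(2*m+2)*1 := by
        apply mul_lt_mul_of_pos_left _ (pow_pos h0 _)
        nlinarith
      _ = t^(2*m+2) := mul_one _
  linarith

lemma auxA' (m : ℕ) (s : ℝ) (h0 : 0 < s) (h1 : s < 1)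
    (he : (1 - s^2)^(m+1) * (1-s) = s^(2*m+4)) : s^2 < 1 - s^2 := by
  by_contra h
  push_neg at h
  have hs2 : (0:ℝ) < s^2 := by positivity
  have hpos : (0:ℝ) < s^(2*m+2) := pow_pos h0 _
  have h1' : (1-s^2)^(m+1) ≤ s^(2*m+2) := by
    calc (1-s^2)^(m+1) ≤ (s^2)^(m+1) := pow_le_pow_left₀ (by nlinarith) h _
      _ = s^(2*m+2) := by ring
  have h2 : s^(2*m+2) * s^2 ≤ s^(2*m+2) * (1-s) := by
    calc s^(2*m+2) * s^2 = s^(2*m+4) := by ring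
      _ = (1 - s^2)^(m+1) * (1-s) := he.symm
      _ ≤ s^(2*m+2) * (1-s) := by
        apply mul_le_mul_of_nonneg_right h1' (by linarith)
  have h3 : s^2 ≤ 1 - s := le_of_mul_le_mul_left h2 hpos
  nlinarith

lemma auxCmpT (m : ℕ) (a b : ℝ) (ha0 : 0 < a) (ha1 : a < 1) (hb0 : 0 < b) (hb1 : b < 1)
    (hEb : (1 - b^2)^(m+3) * (1+b) = b^(2*m+8))
    (hIa : (1 - a^2)^(m+3) * (1+a) < a^(2*m+8)) : b < a := by
  by_contra h
  push_neg at h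
  have ha2 : (0:ℝ) < a^2 := by positivity
  have hb2 : (0:ℝ) < b^2 := by positivity
  have ha1' : (0:ℝ) < 1 + a := by linarith
  have hb1' : (0:ℝ) < 1 + b := by linarith
  have hub : ((1-b^2)/b^2)^(m+3) = b^2/(1+b) := by
    rw [div_pow, div_eq_div_iff (by positivity) hb1'.ne']
    calc (1-b^2)^(m+3) * (1+b) = b^(2*m+8) := hEb
      _ = b^2 * (b^2)^(m+3) := by ring
  have hua : ((1-a^2)/a^2)^(m+3) < a^2/(1+a) := by
    rw [div_pow, div_lt_div_iff₀ (by positivity) ha1']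
    calc (1-a^2)^(m+3) * (1+a) < a^(2*m+8) := hIa
      _ = a^2 * (a^2)^(m+3) := by ring
  have humono : ((1-b^2)/b^2)^(m+3) ≤ ((1-a^2)/a^2)^(m+3) := by
    apply pow_le_pow_left₀ (div_nonneg (by nlinarith) hb2.le)
    rw [div_le_div_iff₀ hb2 ha2]
    nlinarith [mul_nonneg (sub_nonneg.2 h) (by linarith : (0:ℝ) ≤ a+b)]
  have hrmono : a^2/(1+a) ≤ b^2/(1+b) := by
    rw [div_le_div_iff₀ ha1' hb1']
    nlinarith [mul_nonneg (sub_nonneg.2 h) (by linarith : (0:ℝ) ≤ a+b),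
      mul_nonneg (mul_nonneg ha0.le hb0.le) (sub_nonneg.2 h)]
  linarith

lemma auxCmpS (m : ℕ) (a b : ℝ) (ha0 : 0 < a) (ha1 : a < 1) (hb0 : 0 < b) (hb1 : b < 1)
    (hEb : (1 - b^2)^(m+3) * (1-b) = b^(2*m+8))
    (hIa : a^(2*m+8) < (1 - a^2)^(m+3) * (1-a)) : a < b := by
  by_contra h
  push_neg at h
  have ha2 : (0:ℝ) < a^2 := by positivity
  have hb2 : (0:ℝ) < b^2 := by positivity
  have ha1' : (0:ℝ) < 1 - a := by linarith
  have hb1' : (0:ℝ) < 1 - b := by linarith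
  have hub : ((1-b^2)/b^2)^(m+3) = b^2/(1-b) := by
    rw [div_pow, div_eq_div_iff (by positivity) hb1'.ne']
    calc (1-b^2)^(m+3) * (1-b) = b^(2*m+8) := hEb
      _ = b^2 * (b^2)^(m+3) := by ring
  have hua : a^2/(1-a) < ((1-a^2)/a^2)^(m+3) := by
    rw [div_pow, div_lt_div_iff₀ ha1' (by positivity)]
    calc a^2 * (a^2)^(m+3) = a^(2*m+8) := by ring
      _ < (1-a^2)^(m+3) * (1-a) := hIa
  have humono : ((1-a^2)/a^2)^(m+3) ≤ ((1-b^2)/b^2)^(m+3) := by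
    apply pow_le_pow_left₀ (div_nonneg (by nlinarith) ha2.le)
    rw [div_le_div_iff₀ ha2 hb2]
    nlinarith [mul_nonneg (sub_nonneg.2 h) (by linarith : (0:ℝ) ≤ a+b)]
  have hrmono : b^2/(1-b) ≤ a^2/(1-a) := by
    rw [div_le_div_iff₀ hb1' ha1']
    nlinarith [mul_nonneg (sub_nonneg.2 h) (by nlinarith : (0:ℝ) ≤ a + b - a*b)]
  linarith

/-- Monotonicity of the shift parameters of the nonzero real zeros of `D(F_n,x)` for even `n`:
if `t_n, t_{n+2} ∈ (0,1)` satisfy the respective identities, then `t_{n+2} < t_n`, and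
if `s_n, s_{n+2} ∈ (0,1)` satisfy the respective identities, then `s_{n+2} > s_n`. -/
theorem friendship_root_parameters_monotone (n : ℕ) (hn : 2 ≤ n) (hne : Even n)
    (tn tn2 sn sn2 : ℝ)
    (htn : tn ∈ Set.Ioo (0 : ℝ) 1)
    (htn_eq : (1 - tn) ^ (n - 1) * (1 + tn) ^ n = tn ^ (2 * n))
    (htn2 : tn2 ∈ Set.Ioo (0 : ℝ) 1)
    (htn2_eq : (1 - tn2) ^ (n + 1) * (1 + tn2) ^ (n + 2) = tn2 ^ (2 * (n + 2)))
    (hsn : sn ∈ Set.Ioo (0 : ℝ) 1)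
    (hsn_eq : (1 - sn) ^ n * (1 + sn) ^ (n - 1) = sn ^ (2 * n))
    (hsn2 : sn2 ∈ Set.Ioo (0 : ℝ) 1)
    (hsn2_eq : (1 - sn2) ^ (n + 2) * (1 + sn2) ^ (n + 1) = sn2 ^ (2 * (n + 2))) :
    tn2 < tn ∧ sn < sn2 := by
  obtain ⟨m, rfl⟩ : ∃ m, n = m + 2 := ⟨n - 2, by omega⟩
  obtain ⟨ht0, ht1⟩ := htn
  obtain ⟨ht20, ht21⟩ := htn2
  obtain ⟨hs0, hs1⟩ := hsn
  obtain ⟨hs20, hs21⟩ := hsn2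
  have e1 : m + 2 - 1 = m + 1 := rfl
  rw [e1] at htn_eq hsn_eq
  -- combined forms
  have Ht : (1 - tn^2)^(m+1) * (1+tn) = tn^(2*m+4) := by
    calc (1 - tn^2)^(m+1) * (1+tn)
        = (1-tn)^(m+1) * (1+tn)^(m+2) := by
          rw [show (1:ℝ)-tn^2 = (1-tn)*(1+tn) by ring, mul_pow]; ring
      _ = tn^(2*(m+2)) := htn_eq
      _ = tn^(2*m+4) := by ring
  have Ht2 : (1 - tn2^2)^(m+3) * (1+tn2) = tn2^(2*m+8) := by
    calc (1 - tn2^2)^(m+3) * (1+tn2)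
        = (1-tn2)^(m+2+1) * (1+tn2)^(m+2+2) := by
          rw [show (1:ℝ)-tn2^2 = (1-tn2)*(1+tn2) by ring, mul_pow]; ring
      _ = tn2^(2*(m+2+2)) := htn2_eq
      _ = tn2^(2*m+8) := by ring
  have Hs : (1 - sn^2)^(m+1) * (1-sn) = sn^(2*m+4) := by
    calc (1 - sn^2)^(m+1) * (1-sn)
        = (1-sn)^(m+2) * (1+sn)^(m+1) := by
          rw [show (1:ℝ)-sn^2 = (1-sn)*(1+sn) by ring, mul_pow]; ring
      _ = sn^(2*(m+2)) := hsn_eq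
      _ = sn^(2*m+4) := by ring
  have Hs2 : (1 - sn2^2)^(m+3) * (1-sn2) = sn2^(2*m+8) := by
    calc (1 - sn2^2)^(m+3) * (1-sn2)
        = (1-sn2)^(m+2+2) * (1+sn2)^(m+2+1) := by
          rw [show (1:ℝ)-sn2^2 = (1-sn2)*(1+sn2) by ring, mul_pow]; ring
      _ = sn2^(2*(m+2+2)) := hsn2_eq
      _ = sn2^(2*m+8) := by ring
  -- key sign facts
  have hT : 1 - tn^2 < tn^2 := auxA m tn ht0 ht1 Ht
  have hS : sn^2 < 1 - sn^2 := auxA' m sn hs0 hs1 Hs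
  -- strict inequalities at the shifted level
  have hTnn : (0:ℝ) ≤ 1 - tn^2 := by nlinarith
  have hposT : (0:ℝ) < tn^(2*m+4) := pow_pos ht0 _
  have hposS : (0:ℝ) < sn^(2*m+4) := pow_pos hs0 _
  have It : (1 - tn^2)^(m+3) * (1+tn) < tn^(2*m+8) := by
    have hsq : (1-tn^2)^2 < (tn^2)^2 := by nlinarith
    calc (1 - tn^2)^(m+3) * (1+tn)
        = (1-tn^2)^2 * ((1-tn^2)^(m+1)*(1+tn)) := by ring
      _ = (1-tn^2)^2 * tn^(2*m+4) := by rw [Ht]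
      _ < (tn^2)^2 * tn^(2*m+4) := mul_lt_mul_of_pos_right hsq hposT
      _ = tn^(2*m+8) := by ring
  have Is : sn^(2*m+8) < (1 - sn^2)^(m+3) * (1-sn) := by
    have hsq : (sn^2)^2 < (1-sn^2)^2 := by nlinarith
    calc sn^(2*m+8) = (sn^2)^2 * sn^(2*m+4) := by ring
      _ < (1-sn^2)^2 * sn^(2*m+4) := mul_lt_mul_of_pos_right hsq hposS
      _ = (1-sn^2)^2 * ((1-sn^2)^(m+1)*(1-sn)) := by rw [Hs]
      _ = (1 - sn^2)^(m+3) * (1-sn) := by ring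
  exact ⟨auxCmpT m tn tn2 ht0 ht1 ht20 ht21 Ht2 It,
    auxCmpS m sn sn2 hs0 hs1 hs20 hs21 Hs2 Is⟩
end

section
/- Let n ≥ 1 be an integer and let z be a nonzero complex number with z^n (z+2)^n + z (1+z)^{2n} = 0. If |z| > 1, then (|z| − 1)^2 · log|z| ≤ n. -/
/-- If `z ≠ 0` is a root of `z^n (z+2)^n + z (1+z)^(2n)` with `|z| > 1`, then
`(|z| − 1)^2 · log|z| ≤ n`. -/
theorem friendship_root_modulus_implicit_bound (n : ℕ) (hn : 1 ≤ n) (z : ℂ) (hz : z ≠ 0)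
    (hroot : z ^ n * (z + 2) ^ n + z * (1 + z) ^ (2 * n) = 0)
    (habs : 1 < ‖z‖) :
    (‖z‖ - 1) ^ 2 * Real.log (‖z‖) ≤ n := by
  set r := ‖z‖ with hr
  set w : ℂ := z * (z + 2) with hwdef
  set s : ℝ := (r - 1) ^ 2 with hsdef
  have hs : 0 < s := by
    have h1 : 0 < r - 1 := by linarith
    rw [hsdef]; positivity
  -- root equation in terms of w
  have hweq : w ^ n = -(z * (w + 1) ^ n) := by
    have h1 : w + 1 = (1 + z) ^ 2 := by rw [hwdef]; ring
    rw [h1, ← pow_mul, mul_comm 2 n, eq_neg_iff_add_eq_zero, mul_pow]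
    linear_combination hroot
  set T : ℝ := ‖w + 1‖ with hT
  have habsEq : (‖w‖) ^ n = r * T ^ n := by
    calc (‖w‖) ^ n = ‖w ^ n‖ := (norm_pow _ _).symm
    _ = ‖-(z * (w + 1) ^ n)‖ := by rw [hweq]
    _ = r * T ^ n := by rw [norm_neg, norm_mul, norm_pow]
  have hsT : s ≤ T := by
    have h1 : w + 1 = (1 + z) ^ 2 := by rw [hwdef]; ring
    have h2 : r - 1 ≤ ‖1 + z‖ := by
      have h := norm_add_le (1 + z) (-1)
      rw [show (1 + z) + (-1) = z by ring, norm_neg, norm_one] at h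
      linarith
    have h3 : T = (‖1 + z‖) ^ 2 := by rw [hT, h1, norm_pow]
    rw [h3, hsdef]
    exact pow_le_pow_left₀ (by linarith) h2 2
  have hTpos : 0 < T := lt_of_lt_of_le hs hsT
  have hwle : ‖w‖ ≤ T + 1 := by
    calc ‖w‖ = ‖(w + 1) - 1‖ := by ring_nf
    _ ≤ ‖w + 1‖ + ‖(1 : ℂ)‖ := norm_sub_le _ _
    _ = T + 1 := by rw [norm_one]
  -- r * T^n ≤ (T+1)^n
  have hkey : r * T ^ n ≤ (T + 1) ^ n := by
    rw [← habsEq]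
    exact pow_le_pow_left₀ (norm_nonneg _) hwle n
  have hrle : r ≤ (1 + 1 / s) ^ n := by
    have hTn : 0 < T ^ n := pow_pos hTpos n
    have h1 : r ≤ ((T + 1) / T) ^ n := by
      rw [div_pow, le_div_iff₀ hTn]
      exact hkey
    refine h1.trans (pow_le_pow_left₀ (by positivity) ?_ n)
    have h2 : 1 / T ≤ 1 / s := one_div_le_one_div_of_le hs hsT
    rw [add_div, div_self (ne_of_gt hTpos)]
    linarith
  have hexp : r ≤ Real.exp ((n : ℝ) / s) := by
    refine hrle.trans ?_
    have h1 : (1 : ℝ) + 1 / s ≤ Real.exp (1 / s) := by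
      have := Real.add_one_le_exp (1 / s)
      linarith
    calc (1 + 1 / s) ^ n ≤ (Real.exp (1 / s)) ^ n :=
          pow_le_pow_left₀ (by positivity) h1 n
    _ = Real.exp ((n : ℝ) * (1 / s)) := (Real.exp_nat_mul _ n).symm
    _ = Real.exp ((n : ℝ) / s) := by rw [mul_one_div]
  have hlog : Real.log r ≤ (n : ℝ) / s := by
    rw [Real.log_le_iff_le_exp (by linarith)]
    exact hexp
  calc s * Real.log r ≤ s * ((n : ℝ) / s) := by
        exact mul_le_mul_of_nonneg_left hlog (le_of_lt hs)
  _ = n := by field_simp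
end

section
/- Let n ≥ 1 be an integer and let z be a complex number with z^n (z+2)^n + z (1+z)^{2n} = 0. Then |z| ≤ 1 + √(n / log 2). -/
/-- Every complex root `z` of `z^n (z+2)^n + z (1+z)^(2n)` satisfies
`|z| ≤ 1 + √(n / log 2)`. -/
theorem friendship_root_modulus_explicit_bound (n : ℕ) (hn : 1 ≤ n) (z : ℂ)
    (hroot : z ^ n * (z + 2) ^ n + z * (1 + z) ^ (2 * n) = 0) :
    ‖z‖ ≤ 1 + Real.sqrt ((n : ℝ) / Real.log 2) := by
  by_contra hc
  push_neg at hc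
  set r := ‖z‖ with hr
  set s := Real.sqrt ((n : ℝ) / Real.log 2) with hs
  have hlog : (0:ℝ) < Real.log 2 := Real.log_pos (by norm_num)
  have hn1 : (1:ℝ) ≤ (n:ℝ) := by exact_mod_cast hn
  have hnpos : (0:ℝ) < (n:ℝ) := by linarith
  have hs1 : 1 < s := by
    have h : (1:ℝ) < (n : ℝ) / Real.log 2 := by
      have hl : Real.log 2 < 1 := by
        have := Real.log_two_lt_d9; linarith
      rw [lt_div_iff₀ hlog]; linarith
    calc (1:ℝ) = Real.sqrt 1 := Real.sqrt_one.symm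
      _ < s := Real.sqrt_lt_sqrt (by norm_num) h
  set u := ‖1 + z‖ with hu
  -- r - 1 ≤ u
  have hru : r - 1 ≤ u := by
    have : r ≤ u + 1 := by
      calc r = ‖(1 + z) - 1‖ := by ring_nf; exact hr
        _ ≤ ‖1 + z‖ + ‖(1 : ℂ)‖ := by
            simpa using norm_sub_le_norm_sub_add_norm_sub (1 + z) 0 1
        _ = u + 1 := by simp [hu]
    linarith
  have hsu : s < u := by linarith
  have hupos : (0:ℝ) < u := by linarith
  -- key identity
  have h1 : ((1 + z) ^ 2 - 1) ^ n = -(z * (1 + z) ^ (2 * n)) := by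
    have e1 : (1 + z) ^ 2 - 1 = z * (z + 2) := by ring
    rw [e1, mul_pow]
    exact eq_neg_of_add_eq_zero_left hroot
  have habs : (‖(1 + z) ^ 2 - 1‖) ^ n = r * u ^ (2 * n) := by
    rw [← norm_pow, h1]
    simp [norm_mul, norm_pow, hr, hu]
  have htri : ‖(1 + z) ^ 2 - 1‖ ≤ u ^ 2 + 1 := by
    have h0 := norm_sub_le_norm_sub_add_norm_sub ((1 + z) ^ 2) 0 1
    have e2 : ‖(1 + z) ^ 2 - 0‖ = u ^ 2 := by
      rw [sub_zero, norm_pow, hu]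
    have e3 : ‖(0 : ℂ) - 1‖ = 1 := by simp
    linarith
  have hkey : r * (u ^ 2) ^ n ≤ (u ^ 2 + 1) ^ n := by
    have := pow_le_pow_left₀ (norm_nonneg _) htri n
    rw [habs] at this
    rwa [pow_mul] at this
  -- u^2 > n / log 2
  have hu2 : (n : ℝ) / Real.log 2 < u ^ 2 := by
    have hsq : s ^ 2 = (n : ℝ) / Real.log 2 :=
      Real.sq_sqrt (by positivity)
    have : s ^ 2 < u ^ 2 := by
      apply pow_lt_pow_left₀ hsu (by linarith) (by norm_num)
    linarith
  have hnlt : (n : ℝ) < u ^ 2 * Real.log 2 := (div_lt_iff₀ hlog).mp hu2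
  have h2 : u ^ 2 + 1 ≤ u ^ 2 * (1 + Real.log 2 / n) := by
    have h1' : 1 < u ^ 2 * Real.log 2 / n := by
      rw [lt_div_iff₀ hnpos]; linarith
    have : u ^ 2 * (1 + Real.log 2 / n) = u ^ 2 + u ^ 2 * Real.log 2 / n := by
      ring
    linarith [this]
  have h3 : (u ^ 2 + 1) ^ n ≤ (u ^ 2) ^ n * (1 + Real.log 2 / n) ^ n := by
    rw [← mul_pow]
    exact pow_le_pow_left₀ (by positivity) h2 n
  have h4 : (1 + Real.log 2 / n) ^ n ≤ 2 := by
    have he : 1 + Real.log 2 / n ≤ Real.exp (Real.log 2 / n) := by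
      have := Real.add_one_le_exp (Real.log 2 / (n : ℝ)); linarith
    calc (1 + Real.log 2 / n) ^ n ≤ Real.exp (Real.log 2 / n) ^ n :=
          pow_le_pow_left₀ (by positivity) he n
      _ = Real.exp ((n : ℝ) * (Real.log 2 / n)) := (Real.exp_nat_mul _ n).symm
      _ = Real.exp (Real.log 2) := by
          rw [mul_div_cancel₀ _ (ne_of_gt hnpos)]
      _ = 2 := Real.exp_log (by norm_num)
  have hpow_pos : (0:ℝ) < (u ^ 2) ^ n := by positivity
  have hrle : r ≤ (1 + Real.log 2 / n) ^ n := by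
    have : r * (u ^ 2) ^ n ≤ (1 + Real.log 2 / n) ^ n * (u ^ 2) ^ n := by
      calc r * (u ^ 2) ^ n ≤ (u ^ 2 + 1) ^ n := hkey
        _ ≤ (u ^ 2) ^ n * (1 + Real.log 2 / n) ^ n := h3
        _ = (1 + Real.log 2 / n) ^ n * (u ^ 2) ^ n := by ring
    exact le_of_mul_le_mul_right this hpow_pos
  linarith
end

section
/- For each integer n ≥ 1 there exists a unique real number R_n > 1 satisfying (R_n − 1)^2 · log R_n = n, and every complex number z with z^n (z+2)^n + z (1+z)^{2n} = 0 satisfies |z| ≤ R_n. -/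
lemma friendship_f_strictMono :
    StrictMonoOn (fun x : ℝ => (x - 1) ^ 2 * Real.log x) (Set.Ici 1) := by
  intro a ha b hb hab
  simp only [Set.mem_Ici] at ha hb
  rcases eq_or_lt_of_le ha with h1 | h1
  · have hb1 : 1 < b := lt_of_le_of_lt (le_of_eq h1) hab
    have : (0:ℝ) < (b - 1) ^ 2 * Real.log b :=
      mul_pos (by nlinarith) (Real.log_pos hb1)
    simp only [← h1]
    simpa using this
  · have h2 : (a - 1) ^ 2 < (b - 1) ^ 2 := by nlinarith
    have h3 : Real.log a ≤ Real.log b := (Real.log_le_log_iff (by linarith) (by linarith)).mpr hab.le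
    exact mul_lt_mul h2 h3 (Real.log_pos h1) (by positivity)

/-- For each `n ≥ 1` there is a unique `R > 1` with `(R−1)^2 log R = n`, and every complex root
`z` of `z^n (z+2)^n + z (1+z)^(2n)` satisfies `|z| ≤ R`. -/
theorem friendship_root_modulus_optimal_implicit_bound (n : ℕ) (hn : 1 ≤ n) :
    ∃ R : ℝ, (1 < R ∧ (R - 1) ^ 2 * Real.log R = n ∧
      ∀ z : ℂ, z ^ n * (z + 2) ^ n + z * (1 + z) ^ (2 * n) = 0 → ‖z‖ ≤ R) ∧
    ∀ R' : ℝ, 1 < R' → (R' - 1) ^ 2 * Real.log R' = n → R' = R := by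
  set f : ℝ → ℝ := fun x => (x - 1) ^ 2 * Real.log x with hf
  have hn' : (1:ℝ) ≤ n := by exact_mod_cast hn
  -- Existence via IVT on [1, n+2]
  set M : ℝ := (n : ℝ) + 2 with hM
  have hM1 : (1:ℝ) ≤ M := by rw [hM]; linarith
  have hlogM : (1:ℝ) ≤ Real.log M := by
    rw [Real.le_log_iff_exp_le (by linarith)]
    have := Real.exp_one_lt_d9
    rw [hM]; linarith
  have hfM : (n:ℝ) ≤ f M := by
    have h1 : (n:ℝ) ≤ (M - 1) ^ 2 := by rw [hM]; nlinarith
    have h2 : (M - 1) ^ 2 * 1 ≤ (M - 1) ^ 2 * Real.log M :=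
      mul_le_mul_of_nonneg_left hlogM (by positivity)
    show (n:ℝ) ≤ (M - 1) ^ 2 * Real.log M
    linarith
  have hcont : ContinuousOn f (Set.Icc 1 M) := by
    apply ContinuousOn.mul (by fun_prop)
    apply Real.continuousOn_log.mono
    intro x hx
    simp only [Set.mem_compl_iff, Set.mem_singleton_iff]
    have := hx.1
    intro h; rw [h] at this; linarith
  have hivt := intermediate_value_Icc hM1 hcont
  have hf1 : f (1:ℝ) = 0 := by
    show ((1:ℝ) - 1) ^ 2 * Real.log 1 = 0
    simp
  have hmem : (n:ℝ) ∈ Set.Icc (f 1) (f M) := by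
    constructor
    · rw [hf1]; positivity
    · exact hfM
  obtain ⟨R, hRmem, hfR⟩ := hivt hmem
  have hR1 : 1 < R := by
    rcases eq_or_lt_of_le hRmem.1 with h | h
    · exfalso
      rw [← h, hf1] at hfR
      linarith
    · exact h
  have hfR' : (R - 1) ^ 2 * Real.log R = (n:ℝ) := hfR
  refine ⟨R, ⟨hR1, hfR', ?_⟩, ?_⟩
  · -- root bound
    intro z hz
    set r : ℝ := ‖z‖ with hr
    by_cases hrle : r ≤ 1
    · linarith
    push_neg at hrle
    -- w = (z+1)^2
    set w : ℂ := (z + 1) ^ 2 with hw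
    have habs1 : ‖(z + 1) ^ 2‖ = ‖z + 1‖ ^ 2 := norm_pow _ _
    have hker : ‖w - 1‖ ^ n = r * ‖w‖ ^ n := by
      have h1 : (w - 1) ^ n = z ^ n * (z + 2) ^ n := by
        rw [hw]
        rw [show ((z+1)^2 - 1 : ℂ) = z * (z + 2) by ring]
        rw [mul_pow]
      have h2 : z ^ n * (z + 2) ^ n = -(z * (1 + z) ^ (2 * n)) := by linear_combination hz
      calc ‖w - 1‖ ^ n = ‖(w - 1) ^ n‖ := (norm_pow _ _).symm
        _ = ‖-(z * (1 + z) ^ (2 * n))‖ := by rw [h1, h2]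
        _ = r * ‖1 + z‖ ^ (2 * n) := by
            rw [norm_neg, norm_mul, norm_pow]
        _ = r * ‖z + 1‖ ^ (2 * n) := by rw [add_comm (1:ℂ) z]
        _ = r * (‖z + 1‖ ^ 2) ^ n := by rw [← pow_mul]
        _ = r * ‖w‖ ^ n := by rw [hw, habs1]
    set t : ℝ := ‖w‖ with ht
    have hz1 : r - 1 ≤ ‖z + 1‖ := by
      have h : r ≤ ‖z + 1‖ + 1 := by
        calc r = ‖(z + 1) + (-1)‖ := by rw [show (z+1) + (-1 : ℂ) = z by ring]
          _ ≤ ‖z + 1‖ + ‖(-1 : ℂ)‖ := norm_add_le _ _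
          _ = ‖z + 1‖ + 1 := by simp
      linarith
    have ht1 : (r - 1) ^ 2 ≤ t := by
      rw [habs1]
      exact pow_le_pow_left₀ (by linarith) hz1 2
    have ht0 : 0 < t := lt_of_lt_of_le (by nlinarith) ht1
    have hwsub : ‖w - 1‖ ≤ t + 1 := by
      calc ‖w - 1‖ = ‖w + (-1)‖ := by rw [sub_eq_add_neg]
        _ ≤ ‖w‖ + ‖(-1 : ℂ)‖ := norm_add_le _ _
        _ = t + 1 := by simp [ht]
    have hle : r * t ^ n ≤ (t + 1) ^ n := by
      rw [← hker]
      exact pow_le_pow_left₀ (norm_nonneg _) hwsub n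
    have h2 : t + 1 ≤ t * Real.exp (1 / t) := by
      have hexp := Real.add_one_le_exp (1 / t)
      have hmul := mul_le_mul_of_nonneg_left hexp ht0.le
      calc t + 1 = t * (1 / t + 1) := by field_simp; ring
        _ ≤ t * Real.exp (1 / t) := hmul
    have h3 : r * t ^ n ≤ t ^ n * Real.exp ((n : ℝ) / t) := by
      calc r * t ^ n ≤ (t + 1) ^ n := hle
        _ ≤ (t * Real.exp (1 / t)) ^ n := pow_le_pow_left₀ (by positivity) h2 n
        _ = t ^ n * Real.exp (1 / t) ^ n := mul_pow _ _ _
        _ = t ^ n * Real.exp ((n : ℝ) / t) := by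
            rw [← Real.exp_nat_mul, mul_one_div]
    have hrexp : r ≤ Real.exp ((n : ℝ) / t) := by
      have h4 : (0:ℝ) < t ^ n := pow_pos ht0 n
      exact le_of_mul_le_mul_right (by linarith [h3]) h4
    have h5 : Real.log r ≤ (n : ℝ) / t := by
      rw [Real.log_le_iff_le_exp (by linarith)]
      exact hrexp
    have hlogr : 0 < Real.log r := Real.log_pos hrle
    have h6 : (r - 1) ^ 2 * Real.log r ≤ (n : ℝ) := by
      have ha : t * Real.log r ≤ (n : ℝ) := by
        calc t * Real.log r ≤ t * ((n : ℝ) / t) := mul_le_mul_of_nonneg_left h5 ht0.le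
          _ = n := by field_simp
      nlinarith [ht1, hlogr]
    by_contra hcon
    push_neg at hcon
    have hRr : (R - 1) ^ 2 * Real.log R < (r - 1) ^ 2 * Real.log r :=
      friendship_f_strictMono (Set.mem_Ici.mpr hR1.le)
        (Set.mem_Ici.mpr (by linarith : (1:ℝ) ≤ r)) hcon
    linarith
  · intro R' hR'1 hfR2
    have h1 : f R' = f R := by
      show (R' - 1) ^ 2 * Real.log R' = f R
      rw [hfR2, hfR]
    exact friendship_f_strictMono.injOn (Set.mem_Ici.mpr hR'1.le) (Set.mem_Ici.mpr hR1.le) h1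
end

section
/- Let n ≥ 2 be an even integer. Then the polynomial D(B_n,x) = (x^2+2x)^n (2x+1) + x^2 (1+x)^{2n} − 2x^n has at least one real zero in the interval (−∞, −2) and at least one real zero in the interval (−1/2, 0). -/
/-- For even `n ≥ 2`, the book-graph domination polynomial
`D(B_n,x) = (x^2+2x)^n (2x+1) + x^2 (1+x)^(2n) − 2x^n` has a real zero in `(−∞,−2)` and a real
zero in `(−1/2, 0)`. -/
theorem book_real_roots_exist (n : ℕ) (hn : 2 ≤ n) (hne : Even n) :
    (∃ x : ℝ, x < -2 ∧
      (x ^ 2 + 2 * x) ^ n * (2 * x + 1) + x ^ 2 * (1 + x) ^ (2 * n) - 2 * x ^ n = 0) ∧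
    (∃ x : ℝ, x ∈ Set.Ioo (-(1 / 2) : ℝ) 0 ∧
      (x ^ 2 + 2 * x) ^ n * (2 * x + 1) + x ^ 2 * (1 + x) ^ (2 * n) - 2 * x ^ n = 0) := by
  set f : ℝ → ℝ := fun x =>
    (x ^ 2 + 2 * x) ^ n * (2 * x + 1) + x ^ 2 * (1 + x) ^ (2 * n) - 2 * x ^ n with hf
  have hcont : Continuous f := by fun_prop
  have hn0 : n ≠ 0 := by omega
  have h2n : Even (2 * n) := even_two_mul n
  -- value at -3
  have hv3 : f (-3) = 9 * 4 ^ n - 7 * 3 ^ n := by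
    simp only [hf]
    rw [show ((-3:ℝ)) ^ 2 + 2 * (-3) = 3 by norm_num,
        show (1:ℝ) + (-3) = -2 by norm_num, h2n.neg_pow, hne.neg_pow,
        show ((2:ℝ)) ^ (2 * n) = 4 ^ n by rw [pow_mul]; norm_num]
    ring
  have h3pos : (0:ℝ) < 3 ^ n := by positivity
  have h34 : (3:ℝ) ^ n ≤ 4 ^ n := pow_le_pow_left₀ (by norm_num) (by norm_num) n
  have hv3pos : 0 < f (-3) := by rw [hv3]; nlinarith
  -- value at -2
  have hv2 : f (-2) = 4 - 2 * 2 ^ n := by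
    simp only [hf]
    rw [show ((-2:ℝ)) ^ 2 + 2 * (-2) = 0 by norm_num,
        show (1:ℝ) + (-2) = -1 by norm_num, h2n.neg_pow, hne.neg_pow,
        zero_pow hn0, one_pow]
    ring
  have h22 : (4:ℝ) ≤ 2 ^ n := by
    calc (4:ℝ) = 2 ^ 2 := by norm_num
    _ ≤ 2 ^ n := pow_le_pow_right₀ (by norm_num) hn
  have hv2neg : f (-2) < 0 := by rw [hv2]; linarith
  -- value at -1/2
  have hvhalf : f (-(1/2)) = (1/4) * ((1/2) ^ n) ^ 2 - 2 * (1/2) ^ n := by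
    simp only [hf]
    rw [show (2:ℝ) * (-(1/2)) + 1 = 0 by norm_num,
        show (1:ℝ) + (-(1/2)) = 1/2 by norm_num, hne.neg_pow,
        show ((1:ℝ)/2) ^ (2 * n) = ((1/2) ^ n) ^ 2 by rw [pow_mul, pow_right_comm]]
    ring
  have hhpos : (0:ℝ) < (1/2) ^ n := by positivity
  have hhle1 : ((1:ℝ)/2) ^ n ≤ 1 := pow_le_one₀ (by norm_num) (by norm_num)
  have hvhalfneg : f (-(1/2)) < 0 := by rw [hvhalf]; nlinarith
  -- value at -1/10
  have hvt : f (-(1/10)) = (4/5) * ((19/10) ^ n * (1/10) ^ n)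
      + (1/100) * (9/10) ^ (2 * n) - 2 * (1/10) ^ n := by
    simp only [hf]
    rw [show (-((1:ℝ)/10)) ^ 2 + 2 * (-(1/10)) = -(19/100) by norm_num,
        show (1:ℝ) + (-(1/10)) = 9/10 by norm_num, hne.neg_pow, hne.neg_pow,
        show ((19:ℝ)/100) = (19/10) * (1/10) by norm_num, mul_pow]
    ring
  have htpos : (0:ℝ) < (1/10) ^ n := by positivity
  have h19 : ((19:ℝ)/10) ^ 2 ≤ (19/10) ^ n := pow_le_pow_right₀ (by norm_num) hn
  have h9 : (0:ℝ) ≤ (9/10) ^ (2 * n) := by positivity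
  have hvtpos : 0 < f (-(1/10)) := by rw [hvt]; nlinarith
  constructor
  · -- root in (-3, -2)
    have hsub : Set.Icc (f (-2)) (f (-3)) ⊆ f '' Set.Icc (-3) (-2) :=
      intermediate_value_Icc' (by norm_num) hcont.continuousOn
    obtain ⟨c, hc, hfc⟩ := hsub ⟨le_of_lt hv2neg, le_of_lt hv3pos⟩
    refine ⟨c, ?_, hfc⟩
    rcases lt_or_eq_of_le hc.2 with h | h
    · exact h
    · exact absurd (h ▸ hfc) (by rw [hv2]; intro hx; linarith)
  · -- root in (-1/2, -1/10)
    have hsub : Set.Icc (f (-(1/2))) (f (-(1/10))) ⊆ f '' Set.Icc (-(1/2)) (-(1/10)) :=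
      intermediate_value_Icc (by norm_num) hcont.continuousOn
    obtain ⟨c, hc, hfc⟩ := hsub ⟨le_of_lt hvhalfneg, le_of_lt hvtpos⟩
    refine ⟨c, ⟨?_, ?_⟩, hfc⟩
    · rcases lt_or_eq_of_le hc.1 with h | h
      · exact h
      · exfalso; rw [← h] at hfc; linarith
    · linarith [hc.2]
end

section
/- Let n ≥ 1 be an integer. Then for every nonzero integer m, m^n (m+2)^n + m (1+m)^{2n} ≠ 0. Equivalently, the only integer zero of the friendship-graph domination polynomial D(F_n,x) is 0. -/
/-- For `n ≥ 1`, the friendship graph `F_n` has no nonzero integer domination root: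
for every nonzero integer `m`, `m^n (m+2)^n + m (1+m)^(2n) ≠ 0`. -/
theorem friendship_no_nonzero_integer_root (n : ℕ) (hn : 1 ≤ n) (m : ℤ) (hm : m ≠ 0) :
    m ^ n * (m + 2) ^ n + m * (1 + m) ^ (2 * n) ≠ 0 := by
  have key : m ^ n * (m + 2) ^ n + m * (1 + m) ^ (2 * n)
      = (m * (m + 2)) ^ n + m * ((1 + m) ^ 2) ^ n := by
    rw [mul_pow, pow_mul]
  rw [key]
  rcases lt_or_gt_of_ne hm with hneg | hpos
  · rcases eq_or_lt_of_le (show m ≤ -1 by omega) with h1 | h1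
    · -- m = -1
      subst h1
      have : ((0 : ℤ)) ^ n = 0 := zero_pow (by omega)
      norm_num [this]
    rcases eq_or_lt_of_le (show m ≤ -2 by omega) with h2 | h2
    · -- m = -2
      subst h2
      norm_num [zero_pow (show n ≠ 0 by omega)]
    · -- m ≤ -3
      have hm3 : m ≤ -3 := by omega
      set a := m * (m + 2) with ha
      have ha3 : 3 ≤ a := by nlinarith
      have hsq : (1 + m) ^ 2 = a + 1 := by rw [ha]; ring
      rw [hsq]
      have hlt : a ^ n < (a + 1) ^ n := pow_lt_pow_left₀ (by linarith) (by linarith) (by omega)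
      have hpow : 0 < (a + 1) ^ n := pow_pos (by linarith) n
      have hterm : m * (a + 1) ^ n ≤ -3 * (a + 1) ^ n :=
        mul_le_mul_of_nonneg_right hm3 (le_of_lt hpow)
      have : a ^ n + m * (a + 1) ^ n < 0 := by nlinarith
      exact ne_of_lt this
  · -- m ≥ 1
    have h1 : 0 < (m * (m + 2)) ^ n := pow_pos (by nlinarith) n
    have h2 : 0 < m * ((1 + m) ^ 2) ^ n :=
      mul_pos hpos (pow_pos (by positivity) n)
    positivity
end

section
/- Let n ≥ 1 be an integer. Then for every nonzero integer m, (m^2+2m)^n (2m+1) + m^2 (1+m)^{2n} − 2m^n ≠ 0. Equivalently, the only integer zero of the book-graph domination polynomial D(B_n,x) is 0. -/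
/-- For `n ≥ 1`, the book graph `B_n` has no nonzero integer domination root:
for every nonzero integer `m`, `(m^2+2m)^n (2m+1) + m^2 (1+m)^(2n) − 2m^n ≠ 0`. -/
theorem book_no_nonzero_integer_root (n : ℕ) (hn : 1 ≤ n) (m : ℤ) (hm : m ≠ 0) :
    (m ^ 2 + 2 * m) ^ n * (2 * m + 1) + m ^ 2 * (1 + m) ^ (2 * n) - 2 * m ^ n ≠ 0 := by
  rcases show m = -1 ∨ m = -2 ∨ m ≤ -3 ∨ 1 ≤ m by omega with h | h | h | h
  · -- m = -1
    subst h
    have h2n : 2 * n ≠ 0 := by omega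
    norm_num [zero_pow h2n]
    rcases Nat.even_or_odd n with he | ho
    · simp [he.neg_one_pow]
    · simp [ho.neg_one_pow]
  · -- m = -2
    subst h
    have hn0 : n ≠ 0 := by omega
    have hpow : ((-1 : ℤ)) ^ (2 * n) = 1 := by
      rw [pow_mul]; norm_num
    norm_num [zero_pow hn0, hpow]
    rcases eq_or_lt_of_le hn with h1 | h2
    · rw [← h1]; norm_num
    · -- n ≥ 2, so 4 ∣ (-2)^n
      have hd : ((-2 : ℤ)) ^ 2 ∣ (-2) ^ n := pow_dvd_pow _ (by omega)
      norm_num at hd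
      intro hcon
      have : (-2 : ℤ) ^ n = 2 := by linarith
      rw [this] at hd
      omega
  · -- m ≤ -3
    have ha : (1 + m) ^ (2 * n) = ((1 + m) ^ 2) ^ n := by rw [pow_mul]
    rw [ha]
    set A := ((1 + m) ^ 2) ^ n with hA
    have hb : (0 : ℤ) ≤ m ^ 2 + 2 * m := by nlinarith
    have h1 : (m ^ 2 + 2 * m) ^ n ≤ A := by
      apply pow_le_pow_left₀ hb (by nlinarith)
    have h2 : m ^ n ≤ A := by
      refine le_trans (le_abs_self _) ?_
      rw [abs_pow]
      apply pow_le_pow_left₀ (abs_nonneg m)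
      rw [abs_of_neg (by omega : m < 0)]
      nlinarith
    have h3 : (1 : ℤ) ≤ A := by
      calc (1 : ℤ) = 1 ^ n := (one_pow n).symm
        _ ≤ A := pow_le_pow_left₀ (by norm_num) (by nlinarith) n
    have h4 : A * (2 * m + 1) ≤ (m ^ 2 + 2 * m) ^ n * (2 * m + 1) :=
      mul_le_mul_of_nonpos_right h1 (by omega)
    have h5 : (m ^ 2 + 2 * m - 1) * 1 ≤ (m ^ 2 + 2 * m - 1) * A :=
      mul_le_mul_of_nonneg_left h3 (by nlinarith)
    have hpos : 0 < (m ^ 2 + 2 * m) ^ n * (2 * m + 1) + m ^ 2 * A - 2 * m ^ n := by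
      nlinarith
    linarith
  · -- m ≥ 1
    have hm0 : (0 : ℤ) < m := by omega
    have h1 : m ^ n ≤ (m ^ 2 + 2 * m) ^ n :=
      pow_le_pow_left₀ hm0.le (by nlinarith) n
    have h2 : 0 < m ^ n := pow_pos hm0 n
    have h3 : 0 < (1 + m) ^ (2 * n) := pow_pos (by omega) _
    have h4 : m ^ n * 3 ≤ (m ^ 2 + 2 * m) ^ n * (2 * m + 1) :=
      mul_le_mul h1 (by omega) (by norm_num) (le_trans h2.le h1)
    have h5 : 0 < m ^ 2 * (1 + m) ^ (2 * n) := by positivity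
    have : 0 < (m ^ 2 + 2 * m) ^ n * (2 * m + 1) + m ^ 2 * (1 + m) ^ (2 * n) - 2 * m ^ n := by
      linarith
    linarith
end

section
/- Let n ≥ 1 be an integer and let m ≥ 3 be an integer. Then (m(m−2))^n (1 − 2m) + m^2 (m−1)^{2n} − 2(−m)^n > 0; that is, D(B_n, −m) > 0, where D(B_n,x) = (x^2+2x)^n (2x+1) + x^2 (1+x)^{2n} − 2x^n. -/
/-- For `n ≥ 1` and integer `m ≥ 3`, one has
`(m(m−2))^n (1−2m) + m^2 (m−1)^(2n) − 2(−m)^n > 0`, i.e. `D(B_n, −m) > 0`. -/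
theorem book_positive_at_negative_integers (n : ℕ) (hn : 1 ≤ n) (m : ℤ) (hm : 3 ≤ m) :
    (m * (m - 2)) ^ n * (1 - 2 * m) + m ^ 2 * (m - 1) ^ (2 * n) - 2 * (-m) ^ n > 0 := by
  have hmul : (m - 1) ^ (2 * n) = ((m - 1) ^ 2) ^ n := by rw [pow_mul]
  have h2 : (m * (m - 2)) ^ n ≤ ((m - 1) ^ 2) ^ n := by
    apply pow_le_pow_left₀ (by nlinarith) (by nlinarith)
  have h3 : m ^ n ≤ (m * (m - 2)) ^ n := by
    apply pow_le_pow_left₀ (by nlinarith) (by nlinarith)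
  have h4 : (-m) ^ n ≤ m ^ n := by
    calc (-m) ^ n ≤ |(-m) ^ n| := le_abs_self _
      _ = |(-m)| ^ n := by rw [abs_pow]
      _ = m ^ n := by rw [abs_neg, abs_of_nonneg (by omega)]
  have h5 : (0:ℤ) < m ^ n := pow_pos (by omega) n
  rw [hmul]
  nlinarith [mul_le_mul_of_nonneg_left h2 (by nlinarith : (0:ℤ) ≤ m ^ 2),
    mul_le_mul_of_nonneg_left h3 (by nlinarith : (0:ℤ) ≤ (m - 1) ^ 2),
    sq_nonneg m, mul_le_mul_of_nonneg_right (by nlinarith : (4:ℤ) ≤ (m - 1) ^ 2) h5.le]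
end
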